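/- arXiv:math/0410127 — 2 statements merged into one kernel-verified Lean document; each statement's English description precedes it below -/
import Mathlib

section
/- For n ≥ 1: Σ_{k=1}^{n} (1/n)·C(n,k)·C(n,k-1)·4^(n-k) = Σ_{k=0}^{⌊(n-1)/2⌋} Catalan(k)·C(n-1,2k)·4^k·5^(n-2k-1) (Coker's first identity). -/
open Finset Nat
theorem aux1 (k p q : ℕ) :
    ((2*k+p+q).choose (2*k) * (p+q).choose p * (2*k).choose k : ℕ)
      = (2*k+p+q).choose (k+p) * ((k+p).choose k) * ((k+q).choose k) := by
  have h1 : (2*k+p+q) - 2*k = p + q := by omega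
  have h2 : (p+q) - p = q := by omega
  have h3 : (2*k) - k = k := by omega
  have h4 : (2*k+p+q) - (k+p) = k + q := by omega
  have h5 : (k+p) - k = p := by omega
  have h6 : (k+q) - k = q := by omega
  rw [← Nat.cast_inj (R := ℚ)]
  push_cast
  rw [Nat.cast_choose ℚ (by omega), Nat.cast_choose ℚ (by omega),
      Nat.cast_choose ℚ (by omega), Nat.cast_choose ℚ (by omega),
      Nat.cast_choose ℚ (by omega), Nat.cast_choose ℚ (by omega),
      h1, h2, h3, h4, h5, h6]
  have f : ∀ a : ℕ, ((a : ℕ)! : ℚ) ≠ 0 := fun a => by positivity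
  field_simp
theorem aux2 (k p q : ℕ) :
    ((2*(k+1)+p+q).choose (2*(k+1)) * (p+q).choose p * (2*(k+1)).choose (k+2) : ℕ)
      = (2*(k+1)+p+q).choose (k+p+2) * ((k+p+2).choose (k+2)) * ((k+q).choose k) := by
  have h1 : (2*(k+1)+p+q) - 2*(k+1) = p + q := by omega
  have h2 : (p+q) - p = q := by omega
  have h3 : (2*(k+1)) - (k+2) = k := by omega
  have h4 : (2*(k+1)+p+q) - (k+p+2) = k + q := by omega
  have h5 : (k+p+2) - (k+2) = p := by omega
  have h6 : (k+q) - k = q := by omega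
  rw [← Nat.cast_inj (R := ℚ)]
  push_cast
  rw [Nat.cast_choose ℚ (by omega), Nat.cast_choose ℚ (by omega),
      Nat.cast_choose ℚ (by omega), Nat.cast_choose ℚ (by omega),
      Nat.cast_choose ℚ (by omega), Nat.cast_choose ℚ (by omega),
      h1, h2, h3, h4, h5, h6]
  have f : ∀ a : ℕ, ((a : ℕ)! : ℚ) ≠ 0 := fun a => by positivity
  field_simp

-- Narayana / determinant identity: n = a+c+3, m = a+1
theorem aux3 (a c : ℕ) :
    ((a+c+3).choose (a+1) * (a+c+3).choose (a+2)
      + (a+c+3) * ((a+c+2).choose (a+2) * (a+c+2).choose a) : ℕ)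
      = (a+c+3) * ((a+c+2).choose (a+1) * (a+c+2).choose (a+1)) := by
  have h1 : (a+c+3) - (a+1) = c+2 := by omega
  have h2 : (a+c+3) - (a+2) = c+1 := by omega
  have h3 : (a+c+2) - (a+2) = c := by omega
  have h4 : (a+c+2) - a = c+2 := by omega
  have h5 : (a+c+2) - (a+1) = c+1 := by omega
  rw [← Nat.cast_inj (R := ℚ)]
  push_cast
  rw [Nat.cast_choose ℚ (by omega), Nat.cast_choose ℚ (by omega),
      Nat.cast_choose ℚ (by omega), Nat.cast_choose ℚ (by omega),
      Nat.cast_choose ℚ (by omega),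
      h1, h2, h3, h4, h5]
  have e1 : ((a+c+3) : ℕ)! = (a+c+3) * (a+c+2)! := by
    rw [← Nat.factorial_succ]
  have e2 : ((a+2) : ℕ)! = (a+2)*(a+1)*(a)! := by
    rw [Nat.factorial_succ, Nat.factorial_succ]; ring
  have e3 : ((a+1) : ℕ)! = (a+1)*(a)! := by rw [Nat.factorial_succ]
  have e4 : ((c+2) : ℕ)! = (c+2)*(c+1)*(c)! := by
    rw [Nat.factorial_succ, Nat.factorial_succ]; ring
  have e5 : ((c+1) : ℕ)! = (c+1)*(c)! := by rw [Nat.factorial_succ]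
  rw [e1, e2, e4]
  push_cast [e3, e5]
  have f : ∀ a : ℕ, ((a : ℕ)! : ℚ) ≠ 0 := fun a => by positivity
  field_simp
  ring
theorem cat_cast (k : ℕ) :
    (catalan k : ℚ) = (2*k).choose k - (2*k).choose (k+1) := by
  have h : ((k+1) * catalan k : ℕ) = (2*k).choose k :=
    succ_mul_catalan_eq_centralBinom k
  have h2 : ((2*k).choose (k+1) * (k+1) : ℕ) = (2*k).choose k * k := by
    rw [Nat.choose_succ_right_eq]; congr 1; omega
  have hk : ((k:ℚ)+1) ≠ 0 := by positivity
  have h' : ((k:ℚ)+1) * catalan k = (2*k).choose k := by exact_mod_cast h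
  have h2' : ((2*k).choose (k+1) : ℚ) * ((k:ℚ)+1) = (2*k).choose k * k := by
    exact_mod_cast h2
  apply mul_left_cancel₀ hk
  linear_combination h' + h2'

theorem vdm1 (m r : ℕ) :
    ∑ k ∈ range (m+1), m.choose k * r.choose k = (m+r).choose m := by
  rw [show m + r = r + m by ring, Nat.add_choose_eq,
      Finset.Nat.sum_antidiagonal_eq_sum_range_succ_mk]
  refine Finset.sum_congr rfl fun k hk => ?_
  simp only [mem_range] at hk
  rw [← Nat.choose_symm (show k ≤ m by omega)]
  ring

theorem vdm2 (s r : ℕ) :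
    ∑ k ∈ range (s+1), (s+2).choose (k+2) * r.choose k = (s+r+2).choose s := by
  rw [show s + r + 2 = r + (s+2) by ring, Nat.add_choose_eq,
      Finset.Nat.sum_antidiagonal_eq_sum_range_succ_mk]
  refine Finset.sum_congr rfl fun k hk => ?_
  simp only [mem_range] at hk
  rw [show s - k = (s+2) - (k+2) by omega, Nat.choose_symm (by omega)]
  ring
theorem term1 (n m k : ℕ) (hk : k ≤ m) (hm : m + 1 ≤ n) :
    (n-1).choose (2*k) * (n-1-2*k).choose (m-k) * (2*k).choose k
      = (n-1).choose m * (m.choose k * (n-1-m).choose k) := by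
  by_cases h1 : 2*k ≤ n-1
  · by_cases h2 : m + k ≤ n-1
    · obtain ⟨p, hp⟩ : ∃ p, m = k + p := ⟨m - k, by omega⟩
      subst hp
      obtain ⟨q, hq⟩ : ∃ q, n - 1 = 2*k + p + q := ⟨n-1-(k+p+k), by omega⟩
      rw [hq, show 2*k+p+q - 2*k = p + q from by omega,
          show k+p-k = p from by omega,
          show 2*k+p+q - (k+p) = k+q from by omega, aux1]
      ring
    · rw [Nat.choose_eq_zero_of_lt (show n-1-2*k < m-k by omega),
          Nat.choose_eq_zero_of_lt (show n-1-m < k by omega)]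
      ring
  · rw [Nat.choose_eq_zero_of_lt (show n-1 < 2*k by omega),
        Nat.choose_eq_zero_of_lt (show n-1-m < k by omega)]
    ring

theorem term2 (n m k : ℕ) (hk : k + 1 ≤ m) (hm : m + 1 ≤ n) :
    (n-1).choose (2*(k+1)) * (n-1-2*(k+1)).choose (m-(k+1)) * (2*(k+1)).choose (k+2)
      = (n-1).choose (m+1) * ((m+1).choose (k+2) * (n-2-m).choose k) := by
  by_cases h1 : 2*(k+1) ≤ n-1 ∧ m + (k+1) ≤ n-1
  · obtain ⟨p, hp⟩ : ∃ p, m = k + 1 + p := ⟨m - (k+1), by omega⟩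
    subst hp
    obtain ⟨q, hq⟩ : ∃ q, n - 1 = 2*(k+1) + p + q := ⟨n-1-(k+1+p+(k+1)), by omega⟩
    rw [show n - 2 - (k+1+p) = k + q from by omega,
        hq, show 2*(k+1)+p+q - 2*(k+1) = p + q from by omega,
        show k+1+p-(k+1) = p from by omega,
        show k+1+p+1 = k+p+2 from by omega, aux2]
    ring
  · -- zero cases; in all of them m+k+1 > n-1 or 2(k+1) > n-1, and both give m+k+1 > n-1 impossible... derive LHS=0, RHS=0
    have hz : m + k + 1 > n - 1 ∨ 2*(k+1) > n-1 := by omega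
    have hL : (n-1).choose (2*(k+1)) * (n-1-2*(k+1)).choose (m-(k+1)) = 0 := by
      rcases hz with h | h
      · by_cases h2 : 2*(k+1) ≤ n-1
        · rw [Nat.choose_eq_zero_of_lt (show n-1-2*(k+1) < m-(k+1) by omega)]; ring
        · rw [Nat.choose_eq_zero_of_lt (show n-1 < 2*(k+1) by omega)]; ring
      · rw [Nat.choose_eq_zero_of_lt (show n-1 < 2*(k+1) by omega)]; ring
    have hmk : m + k + 1 > n - 1 := by omega
    have hR : (n-1).choose (m+1) * (n-2-m).choose k = 0 := by
      by_cases hc : m + 1 ≤ n - 1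
      · rw [Nat.choose_eq_zero_of_lt (show n-2-m < k by omega)]; ring
      · rw [Nat.choose_eq_zero_of_lt (show n-1 < m+1 by omega)]; ring
    calc (n-1).choose (2*(k+1)) * (n-1-2*(k+1)).choose (m-(k+1)) * (2*(k+1)).choose (k+2)
        = ((n-1).choose (2*(k+1)) * (n-1-2*(k+1)).choose (m-(k+1))) * (2*(k+1)).choose (k+2) := by ring
      _ = 0 := by rw [hL]; ring
      _ = (n-1).choose (m+1) * ((m+1).choose (k+2) * (n-2-m).choose k) := by
          rw [show (n-1).choose (m+1) * ((m+1).choose (k+2) * (n-2-m).choose k)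
              = ((n-1).choose (m+1) * (n-2-m).choose k) * (m+1).choose (k+2) from by ring, hR]; ring

theorem L1sum (n m : ℕ) (hm : m + 1 ≤ n) :
    ∑ k ∈ range (m+1), (n-1).choose (2*k) * (n-1-2*k).choose (m-k) * (2*k).choose k
      = (n-1).choose m * (n-1).choose m := by
  rw [Finset.sum_congr rfl (fun k hk => term1 n m k (by simpa using Nat.lt_succ_iff.mp (mem_range.mp hk)) hm),
      ← Finset.mul_sum, vdm1, show m + (n-1-m) = n-1 from by omega]

theorem L2sum (n m : ℕ) (hm1 : 1 ≤ m) (hm : m + 1 ≤ n) :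
    ∑ k ∈ range (m+1), (n-1).choose (2*k) * (n-1-2*k).choose (m-k) * (2*k).choose (k+1)
      = (n-1).choose (m+1) * (n-1).choose (m-1) := by
  rw [Finset.sum_range_succ']
  simp only [Nat.mul_zero, Nat.choose_one_right, Nat.mul_one, Nat.choose_zero_right]
  rw [Finset.sum_congr rfl (fun k hk => term2 n m k (by simpa using mem_range.mp hk) hm),
      ← Finset.mul_sum]
  by_cases hc : m + 1 ≤ n - 1
  · obtain ⟨s, hs⟩ : ∃ s, m = s + 1 := ⟨m - 1, by omega⟩
    subst hs
    rw [show s + 1 + 1 = s + 2 from rfl, vdm2,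
        show s + (n-2-(s+1)) + 2 = n - 1 from by omega,
        show s + 1 - 1 = s from by omega]
    simp
  · rw [Nat.choose_eq_zero_of_lt (show n-1 < m+1 by omega)]
    simp
theorem nar (n m : ℕ) (hm1 : 1 ≤ m) (hm : m + 1 ≤ n) :
    (n.choose m * n.choose (m+1) : ℕ)
      + n * ((n-1).choose (m+1) * (n-1).choose (m-1))
      = n * ((n-1).choose m * (n-1).choose m) := by
  by_cases hc : m + 2 ≤ n
  · obtain ⟨a, ha⟩ : ∃ a, m = a + 1 := ⟨m-1, by omega⟩
    obtain ⟨c, hcc⟩ : ∃ c, n = a + c + 3 := ⟨n-m-2, by omega⟩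
    subst ha; subst hcc
    have := aux3 a c
    rw [show a+c+3-1 = a+c+2 from by omega, show a+1-1 = a from by omega,
        show a+1+1 = a+2 from by omega]
    omega
  · have hmn : m = n - 1 := by omega
    subst hmn
    rw [show n-1+1 = n from by omega, Nat.choose_self,
        Nat.choose_eq_zero_of_lt (show n-1 < n by omega)]
    have h9 : n.choose (n-1) = n := by
      rw [Nat.choose_symm (by omega : 1 ≤ n), Nat.choose_one_right]
    simp [h9, Nat.choose_self]

theorem coeff (n m : ℕ) (hm : m < n) :
    (1/n : ℚ) * (n.choose (n-m)) * (n.choose (n-m-1))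
      = ∑ k ∈ range (m+1),
          (catalan k : ℚ) * (n-1).choose (2*k) * (n-1-2*k).choose (m-k) := by
  have hn0 : (n:ℚ) ≠ 0 := by
    have : 0 < n := by omega
    exact_mod_cast this.ne'
  have hsym1 : n.choose (n-m) = n.choose m := Nat.choose_symm (by omega)
  have hsym2 : n.choose (n-m-1) = n.choose (m+1) := by
    rw [show n-m-1 = n-(m+1) from by omega]
    exact Nat.choose_symm (by omega)
  rw [hsym1, hsym2]
  rcases Nat.eq_zero_or_pos m with h0 | hpos
  · subst h0
    simp only [range_one, sum_singleton, catalan_zero, Nat.mul_zero,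
      Nat.choose_zero_right, Nat.sub_zero, Nat.cast_one, zero_add, Nat.zero_sub]
    rw [Nat.choose_one_right]
    push_cast
    field_simp
  · have key := nar n m hpos hm
    have e1 : ∑ k ∈ range (m+1),
        (catalan k : ℚ) * (n-1).choose (2*k) * (n-1-2*k).choose (m-k)
        = ((n-1).choose m * (n-1).choose m : ℕ)
          - ((n-1).choose (m+1) * (n-1).choose (m-1) : ℕ) := by
      rw [← L1sum n m hm, ← L2sum n m hpos hm]
      push_cast
      rw [← Finset.sum_sub_distrib]
      refine Finset.sum_congr rfl fun k hk => ?_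
      rw [cat_cast]
      ring
    rw [e1]
    have key' : (n.choose m * n.choose (m+1) : ℚ)
        + n * ((n-1).choose (m+1) * (n-1).choose (m-1))
        = n * ((n-1).choose m * (n-1).choose m) := by exact_mod_cast key
    push_cast
    field_simp
    linarith [key']
theorem zeroterm (n k j : ℕ) (hn : 1 ≤ n) (h : n ≤ k + j) :
    ((n-1).choose (2*k) * ((n-1-2*k).choose j) : ℚ) = 0 := by
  by_cases h1 : 2*k ≤ n-1
  · rw [Nat.choose_eq_zero_of_lt (show n-1-2*k < j by omega)]; push_cast; ring
  · rw [Nat.choose_eq_zero_of_lt (show n-1 < 2*k by omega)]; push_cast; ring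

/-- Coker's first identity:
`Σ_{k=1}^n (1/n)·C(n,k)·C(n,k-1)·4^(n-k) = Σ_{k=0}^{⌊(n-1)/2⌋} Catalan(k)·C(n-1,2k)·4^k·5^(n-2k-1)`. -/
theorem coker_first_identity (n : ℕ) (hn : 1 ≤ n) :
    ∑ k ∈ Finset.Icc 1 n, (1 / n : ℚ) * n.choose k * n.choose (k - 1) * 4 ^ (n - k) =
      ∑ k ∈ Finset.range ((n - 1) / 2 + 1),
        (catalan k : ℚ) * (n - 1).choose (2 * k) * 4 ^ k * 5 ^ (n - 2 * k - 1) := by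
  -- the common middle expression: a double sum over the square
  have key : ∀ (S : Finset (Σ _m : ℕ, ℕ)), True := fun _ => trivial
  -- Step A: reindex LHS
  have stepA : ∑ k ∈ Finset.Icc 1 n, (1 / n : ℚ) * n.choose k * n.choose (k - 1) * 4 ^ (n - k)
      = ∑ m ∈ range n, (1/n : ℚ) * (n.choose (n-m)) * (n.choose (n-m-1)) * 4 ^ m := by
    refine Finset.sum_nbij' (fun k => n - k) (fun m => n - m) ?_ ?_ ?_ ?_ ?_
    · intro a ha; simp only [mem_Icc] at ha; simp only [mem_range]; omega
    · intro a ha; simp only [mem_range] at ha; simp only [mem_Icc]; omega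
    · intro a ha; simp only [mem_Icc] at ha; omega
    · intro a ha; simp only [mem_range] at ha; omega
    · intro a ha; simp only [mem_Icc] at ha
      rw [show n - (n - a) = a from by omega]
  rw [stepA]
  -- Step B: substitute the coefficient identity, distribute 4^m
  have stepB : ∑ m ∈ range n, (1/n : ℚ) * (n.choose (n-m)) * (n.choose (n-m-1)) * 4 ^ m
      = ∑ m ∈ range n, ∑ k ∈ range (m+1),
          (catalan k : ℚ) * (n-1).choose (2*k) * (n-1-2*k).choose (m-k) * 4 ^ m := by
    refine Finset.sum_congr rfl fun m hm => ?_
    rw [coeff n m (mem_range.mp hm), Finset.sum_mul]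
  rw [stepB]
  -- Step C: triangle to (k,j) form
  have stepC : ∑ m ∈ range n, ∑ k ∈ range (m+1),
          (catalan k : ℚ) * (n-1).choose (2*k) * (n-1-2*k).choose (m-k) * 4 ^ m
      = ∑ k ∈ range n, ∑ j ∈ range (n - k),
          (catalan k : ℚ) * (n-1).choose (2*k) * (n-1-2*k).choose j * 4 ^ (k+j) := by
    rw [Finset.sum_sigma' (range n) (fun m => range (m+1))
          (fun m k => (catalan k : ℚ) * (n-1).choose (2*k) * (n-1-2*k).choose (m-k) * 4 ^ m),
        Finset.sum_sigma' (range n) (fun k => range (n - k))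
          (fun k j => (catalan k : ℚ) * (n-1).choose (2*k) * (n-1-2*k).choose j * 4 ^ (k+j))]
    refine Finset.sum_nbij' (fun p => ⟨p.2, p.1 - p.2⟩) (fun p => ⟨p.1 + p.2, p.1⟩) ?_ ?_ ?_ ?_ ?_
    · rintro ⟨m, k⟩ h; simp only [mem_sigma, mem_range] at h ⊢
      refine ⟨by omega, by omega⟩
    · rintro ⟨k, j⟩ h; simp only [mem_sigma, mem_range] at h ⊢
      refine ⟨by omega, by omega⟩
    · rintro ⟨m, k⟩ h; simp only [mem_sigma, mem_range] at h
      dsimp only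
      rw [show k + (m - k) = m from by omega]
    · rintro ⟨k, j⟩ h; simp only [mem_sigma, mem_range] at h
      dsimp only
      rw [show k + j - k = j from by omega]
    · rintro ⟨m, k⟩ h; simp only [mem_sigma, mem_range] at h
      dsimp only
      rw [show k + (m - k) = m from by omega]
  rw [stepC]
  -- Step D: extend inner sum to range n
  have stepD : ∑ k ∈ range n, ∑ j ∈ range (n - k),
          (catalan k : ℚ) * (n-1).choose (2*k) * (n-1-2*k).choose j * 4 ^ (k+j)
      = ∑ k ∈ range n, ∑ j ∈ range n,
          (catalan k : ℚ) * (n-1).choose (2*k) * (n-1-2*k).choose j * 4 ^ (k+j) := by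
    refine Finset.sum_congr rfl fun k hk => ?_
    refine Finset.sum_subset (by intro x hx; simp only [mem_range] at *; omega) ?_
    intro j hj hj2
    simp only [mem_range] at hj hj2
    have h0 := zeroterm n k j hn (by omega)
    calc (catalan k : ℚ) * (n-1).choose (2*k) * (n-1-2*k).choose j * 4 ^ (k+j)
        = (catalan k : ℚ) * ((((n-1).choose (2*k) : ℚ)) * ((n-1-2*k).choose j : ℚ)) * 4 ^ (k+j) := by
          push_cast; ring
      _ = 0 := by rw [h0]; ring
  rw [stepD]
  -- Step E: RHS equals the square sum
  rw [eq_comm]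
  have stepE1 : ∀ k ∈ Finset.range ((n - 1) / 2 + 1),
      (catalan k : ℚ) * (n - 1).choose (2 * k) * 4 ^ k * 5 ^ (n - 2 * k - 1)
        = ∑ j ∈ range n,
          (catalan k : ℚ) * (n-1).choose (2*k) * (n-1-2*k).choose j * 4 ^ (k+j) := by
    intro k hk
    simp only [mem_range] at hk
    have h2k : 2*k ≤ n - 1 := by omega
    have hpow : (5:ℚ) ^ (n - 2*k - 1) = ∑ j ∈ range (n - 2*k),
        (4:ℚ)^j * 1^(n-2*k-1-j) * (n-2*k-1).choose j := by
      rw [show (5:ℚ) = 4 + 1 from by norm_num, add_pow,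
          show n - 2*k - 1 + 1 = n - 2*k from by omega]
    rw [hpow, Finset.mul_sum]
    rw [show ∑ j ∈ range n, (catalan k : ℚ) * (n-1).choose (2*k) * (n-1-2*k).choose j * 4 ^ (k+j)
        = ∑ j ∈ range (n - 2*k), (catalan k : ℚ) * (n-1).choose (2*k) * (n-1-2*k).choose j * 4 ^ (k+j)
        from (Finset.sum_subset (by intro x hx; simp only [mem_range] at *; omega)
          (by intro j hj hj2; simp only [mem_range] at hj hj2
              rw [Nat.choose_eq_zero_of_lt (show n-1-2*k < j by omega)]
              push_cast; ring)).symm]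
    refine Finset.sum_congr rfl fun j hj => ?_
    rw [show n - 2*k - 1 = n - 1 - 2*k from by omega, pow_add]
    push_cast
    ring
  rw [Finset.sum_congr rfl stepE1]
  -- extend outer k-range to range n
  refine Finset.sum_subset (by intro x hx; simp only [mem_range] at *; omega) ?_
  intro k hk hk2
  simp only [mem_range] at hk hk2
  refine Finset.sum_eq_zero fun j hj => ?_
  rw [Nat.choose_eq_zero_of_lt (show n-1 < 2*k by omega)]
  push_cast; ring
end

section
/- For n ≥ 1: Σ_{i=1}^{⌊(n+1)/2⌋} Σ_{j=0}^{n-2i+1} (1/n)·C(n,i)·C(n-i,j)·C(n-i-j,i-1) = Catalan(n), i.e., the total number of plane trees with n edges is the n-th Catalan number, recovered by summing the refined count over all numbers of old and young leaves. -/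
open Finset

/-- Unconditional binomial "swap" identity in ℕ (truncated subtraction). -/
lemma choose_swap (m a b : ℕ) :
    m.choose a * (m - a).choose b = m.choose b * (m - b).choose a := by
  rcases le_or_gt (a + b) m with h | h
  · have h1 := Nat.choose_mul (n := m) (Nat.le_add_right a b)
    have h2 := Nat.choose_mul (n := m) (Nat.le_add_left b a)
    rw [Nat.add_sub_cancel_left] at h1
    rw [Nat.add_sub_cancel] at h2
    rw [← h1, ← h2, Nat.choose_symm_add]
  · have l : m.choose a * (m - a).choose b = 0 := by
      rcases le_or_gt a m with ha | ha
      · have : m - a < b := by omega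
        simp [Nat.choose_eq_zero_of_lt this]
      · simp [Nat.choose_eq_zero_of_lt ha]
    have r : m.choose b * (m - b).choose a = 0 := by
      rcases le_or_gt b m with hb | hb
      · have : m - b < a := by omega
        simp [Nat.choose_eq_zero_of_lt this]
      · simp [Nat.choose_eq_zero_of_lt hb]
    rw [l, r]

lemma sum_choose_eq (m N : ℕ) (h : m < N) :
    ∑ a ∈ range N, m.choose a = 2 ^ m := by
  rw [← Nat.sum_range_choose m]
  exact (Finset.sum_subset (Finset.range_subset_range.mpr h) (fun x _ hx => by
    simp only [mem_range, not_lt] at hx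
    exact Nat.choose_eq_zero_of_lt (by omega))).symm

theorem main_nat (n : ℕ) (hn : 1 ≤ n) :
    ∑ i ∈ Finset.Icc 1 ((n + 1) / 2), ∑ j ∈ Finset.range (n + 2 - 2 * i),
        n.choose i * (n - i).choose j * (n - i - j).choose (i - 1) =
      (2 * n).choose (n - 1) := by
  have step1 : ∀ i ∈ Finset.Icc 1 ((n + 1) / 2),
      ∑ j ∈ Finset.range (n + 2 - 2 * i),
          n.choose i * (n - i).choose j * (n - i - j).choose (i - 1)
        = n.choose i * (n - i).choose (i - 1) * 2 ^ (n + 1 - 2 * i) := by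
    intro i hi
    simp only [Finset.mem_Icc] at hi
    have h2i : 2 * i ≤ n + 1 := by omega
    have hterm : ∀ j, n.choose i * (n - i).choose j * (n - i - j).choose (i - 1)
        = n.choose i * (n - i).choose (i - 1) * (n + 1 - 2 * i).choose j := by
      intro j
      rw [mul_assoc, choose_swap (n - i) j (i - 1),
        show n - i - (i - 1) = n + 1 - 2 * i from by omega, mul_assoc]
    simp only [hterm]
    rw [← Finset.mul_sum, sum_choose_eq _ _ (by omega)]
  rw [Finset.sum_congr rfl step1]
  rw [Finset.sum_subset (Finset.Icc_subset_Icc_right (show (n+1)/2 ≤ n+1 by omega))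
    (fun x hx hx' => by
      simp only [Finset.mem_Icc] at hx hx'
      have : n - x < x - 1 := by omega
      simp [Nat.choose_eq_zero_of_lt this])]
  have step3 : ∀ i ∈ Finset.Icc 1 (n + 1),
      n.choose i * (n - i).choose (i - 1) * 2 ^ (n + 1 - 2 * i)
        = ∑ k ∈ Finset.Ico i (n + 2),
            n.choose i * (n - i).choose (i - 1) * (n + 1 - 2 * i).choose (k - i) := by
    intro i hi
    simp only [Finset.mem_Icc] at hi
    rw [Finset.sum_Ico_eq_sum_range]
    simp only [Nat.add_sub_cancel_left]
    rw [← Finset.mul_sum, sum_choose_eq _ _ (by omega)]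
  rw [Finset.sum_congr rfl step3]
  rw [show Finset.Icc 1 (n + 1) = Finset.Ico 1 (n + 2) from (Finset.Ico_add_one_right_eq_Icc 1 (n+1)).symm]
  rw [Finset.sum_Ico_Ico_comm]
  have step5 : ∀ k ∈ Finset.Ico 1 (n + 2),
      ∑ i ∈ Finset.Ico 1 (k + 1),
          n.choose i * (n - i).choose (i - 1) * (n + 1 - 2 * i).choose (k - i)
        = n.choose k * n.choose (k - 1) := by
    intro k hk
    simp only [Finset.mem_Ico] at hk
    rw [Finset.sum_Ico_eq_sum_range]
    simp only [Nat.add_sub_cancel]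
    rcases Nat.lt_or_ge k (n + 1) with hkn | hkn
    · -- k ≤ n
      have hkn' : k ≤ n := by omega
      have vand : n.choose (k - 1) = ∑ j ∈ Finset.range k, k.choose (k - 1 - j) * (n - k).choose j := by
        have h := Nat.add_choose_eq k (n - k) (k - 1)
        rw [Finset.Nat.sum_antidiagonal_eq_sum_range_succ
            (fun a b => k.choose a * (n - k).choose b)] at h
        rw [show k + (n - k) = n from by omega,
          show (k - 1).succ = k from by omega] at h
        rw [h, ← Finset.sum_range_reflect]
        refine Finset.sum_congr rfl fun j hj => ?_
        simp only [Finset.mem_range] at hj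
        rw [show k - 1 - (k - 1 - j) = j from by omega]
      rw [vand, Finset.mul_sum]
      refine Finset.sum_congr rfl fun j hj => ?_
      simp only [Finset.mem_range] at hj
      rcases le_or_gt (2 * (1 + j)) (n + 1) with hb | hb
      · -- nondegenerate case
        have h1 : (n - (1 + j)).choose ((1 + j) - 1) * (n + 1 - 2 * (1 + j)).choose (k - (1 + j))
            = (n - (1 + j)).choose (k - (1 + j)) * (n - k).choose j := by
          rw [show (n + 1 - 2 * (1 + j)) = (n - (1 + j)) - ((1 + j) - 1) from by omega,
            choose_swap (n - (1 + j)) ((1 + j) - 1) (k - (1 + j)),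
            show n - (1 + j) - (k - (1 + j)) = n - k from by omega,
            show (1 + j) - 1 = j from by omega]
        have h2 : n.choose k * k.choose (1 + j) = n.choose (1 + j) * (n - (1 + j)).choose (k - (1 + j)) :=
          Nat.choose_mul (n := n) (by omega)
        have h3 : k.choose (k - 1 - j) = k.choose (1 + j) := by
          rw [show k - 1 - j = k - (1 + j) from by omega]
          exact Nat.choose_symm (by omega)
        calc n.choose (1 + j) * (n - (1 + j)).choose ((1 + j) - 1) * (n + 1 - 2 * (1 + j)).choose (k - (1 + j))
            = n.choose (1 + j) * ((n - (1 + j)).choose ((1 + j) - 1) * (n + 1 - 2 * (1 + j)).choose (k - (1 + j))) := by ring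
          _ = n.choose (1 + j) * ((n - (1 + j)).choose (k - (1 + j)) * (n - k).choose j) := by rw [h1]
          _ = n.choose (1 + j) * (n - (1 + j)).choose (k - (1 + j)) * (n - k).choose j := by ring
          _ = n.choose k * k.choose (1 + j) * (n - k).choose j := by rw [← h2]
          _ = n.choose k * (k.choose (k - 1 - j) * (n - k).choose j) := by rw [h3]; ring
      · -- degenerate: both sides vanish
        have hL : (n - (1 + j)).choose ((1 + j) - 1) = 0 :=
          Nat.choose_eq_zero_of_lt (by omega)
        have hR : (n - k).choose j = 0 :=
          Nat.choose_eq_zero_of_lt (by omega)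
        rw [hL, hR]
        ring
    · -- k = n + 1 : both sides vanish
      have hk' : k = n + 1 := by omega
      have hR : n.choose k = 0 := Nat.choose_eq_zero_of_lt (by omega)
      rw [hR, zero_mul]
      refine Finset.sum_eq_zero fun j hj => ?_
      simp only [Finset.mem_range] at hj
      rcases le_or_gt (1 + j) n with h | h
      · have : (n + 1 - 2 * (1 + j)).choose (k - (1 + j)) = 0 :=
          Nat.choose_eq_zero_of_lt (by omega)
        rw [this, mul_zero]
      · have : n.choose (1 + j) = 0 := Nat.choose_eq_zero_of_lt (by omega)
        rw [this, zero_mul, zero_mul]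
  rw [Finset.sum_congr rfl step5]
  -- step 6
  have h6 : (2 * n).choose (n - 1) = (n + n).choose (n + 1) := by
    rw [two_mul]
    have h := Nat.choose_symm (show n + 1 ≤ n + n by omega)
    rw [show n + n - (n + 1) = n - 1 from by omega] at h
    exact h
  rw [h6, Nat.add_choose_eq, Finset.Nat.sum_antidiagonal_eq_sum_range_succ_mk,
    Finset.sum_Ico_eq_sum_range]
  rw [show n + 2 - 1 = n + 1 from rfl]
  rw [Finset.sum_range_succ' (fun k => n.choose k * n.choose (n + 1 - k)) (n + 1)]
  simp only [Nat.choose_eq_zero_of_lt (show n < n + 1 - 0 by omega), mul_zero, add_zero]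
  refine Finset.sum_congr rfl fun j hj => ?_
  simp only [Finset.mem_range] at hj
  rw [show 1 + j = j + 1 from by omega, show (j + 1) - 1 = j from by omega,
    show n + 1 - (j + 1) = n - j from by omega, Nat.choose_symm (by omega : j ≤ n)]

/-- Summing the refined count of plane trees over all numbers of old and young leaves
gives the `n`-th Catalan number:
`Σ_{i=1}^{⌊(n+1)/2⌋} Σ_{j=0}^{n-2i+1} (1/n)·C(n,i)·C(n-i,j)·C(n-i-j,i-1) = Catalan(n)`. -/
theorem sum_refined_eq_catalan (n : ℕ) (hn : 1 ≤ n) :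
    ∑ i ∈ Finset.Icc 1 ((n + 1) / 2), ∑ j ∈ Finset.range (n + 2 - 2 * i),
        (1 / n : ℚ) * n.choose i * (n - i).choose j * (n - i - j).choose (i - 1) =
      (catalan n : ℚ) := by
  have key := main_nat n hn
  have hcat : (2 * n).choose (n - 1) = n * catalan n := by
    have h1 := Nat.choose_succ_right_eq (2 * n) (n - 1)
    rw [show n - 1 + 1 = n from by omega, show 2 * n - (n - 1) = n + 1 from by omega] at h1
    have h2 : (n + 1) * catalan n = (2 * n).choose n := by
      rw [catalan_eq_centralBinom_div, Nat.mul_div_cancel' (Nat.succ_dvd_centralBinom n),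
        Nat.centralBinom]
    apply Nat.eq_of_mul_eq_mul_right (show 0 < n + 1 by omega)
    calc (2 * n).choose (n - 1) * (n + 1) = (2 * n).choose n * n := h1.symm
      _ = (n + 1) * catalan n * n := by rw [h2]
      _ = n * catalan n * (n + 1) := by ring
  have hfac : ∑ i ∈ Finset.Icc 1 ((n + 1) / 2), ∑ j ∈ Finset.range (n + 2 - 2 * i),
        (1 / n : ℚ) * n.choose i * (n - i).choose j * (n - i - j).choose (i - 1)
      = (1 / n : ℚ) * ((∑ i ∈ Finset.Icc 1 ((n + 1) / 2), ∑ j ∈ Finset.range (n + 2 - 2 * i),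
          n.choose i * (n - i).choose j * (n - i - j).choose (i - 1) : ℕ) : ℚ) := by
    push_cast
    rw [Finset.mul_sum]
    refine Finset.sum_congr rfl fun i _ => ?_
    rw [Finset.mul_sum]
    exact Finset.sum_congr rfl fun j _ => by ring
  rw [hfac, key, hcat]
  have hn0 : (n : ℚ) ≠ 0 := Nat.cast_ne_zero.mpr (by omega)
  push_cast
  field_simp
end
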